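/- Fix constants θ1 > θ0 > 0, let T > 0, define J(T) = (2/θ1²)·[1 - (1 + θ1 T)e^{-θ1 T}]/(θ0/θ1 + (1 - θ0/θ1)e^{-θ1 T}), and define J^T(D) = (J(T) + (2/θ1)T)·(1 - e^{-θ1 D})/(1 - e^{-θ1 T}) - (2/θ1)D for 0 ≤ D ≤ T and J^T(D) = e^{-θ0(D - T)}·J(T) for D ≥ T. Then D ↦ J^T(D) is continuously differentiable on (0, ∞) (in particular the two branches agree in value and in first derivative at D = T), is twice continuously differentiable on (0, T) and on (T, ∞), satisfies (J^T)''(D) + θ1 (J^T)'(D) + 2 = 0 for D ∈ (0, T) and (J^T)''(D) + θ0 (J^T)'(D) = 0 for D ∈ (T, ∞), and satisfies J^T(0) = 0 and J^T(D) → 0 as D → ∞. -/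

import Mathlib

open Set Filter

/-- Analytic characterization of the expected cost `J^T` of the threshold policy
(Theorem 8, fluid model). With `θ1 > θ0 > 0`, `T > 0`,
`J(T) = (2/θ1²) (1 - (1 + θ1 T) exp (-θ1 T)) / (θ0/θ1 + (1 - θ0/θ1) exp (-θ1 T))`, and
`J^T` defined piecewise by
`J^T(D) = (J(T) + (2/θ1) T) (1 - exp (-θ1 D)) / (1 - exp (-θ1 T)) - (2/θ1) D` for `D ≤ T`
and `J^T(D) = exp (-θ0 (D - T)) J(T)` for `D ≥ T`: `J^T` is continuously differentiable on
`(0, ∞)` (the two branches agree in value and first derivative at `T`), is twice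
continuously differentiable on `(0, T)` and on `(T, ∞)`, satisfies
`(J^T)'' + θ1 (J^T)' + 2 = 0` on `(0, T)` and `(J^T)'' + θ0 (J^T)' = 0` on `(T, ∞)`,
`J^T(0) = 0`, and `J^T(D) → 0` as `D → ∞`. -/
theorem threshold_cost_characterization (θ0 θ1 T : ℝ)
    (hθ0 : 0 < θ0) (hθ01 : θ0 < θ1) (hT : 0 < T)
    (JT : ℝ)
    (hJT : JT = (2 / θ1 ^ 2) * (1 - (1 + θ1 * T) * Real.exp (-θ1 * T))
        / (θ0 / θ1 + (1 - θ0 / θ1) * Real.exp (-θ1 * T)))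
    (low high Jfun : ℝ → ℝ)
    (hlow : ∀ D : ℝ, low D = (JT + (2 / θ1) * T) * (1 - Real.exp (-θ1 * D))
        / (1 - Real.exp (-θ1 * T)) - (2 / θ1) * D)
    (hhigh : ∀ D : ℝ, high D = Real.exp (-θ0 * (D - T)) * JT)
    (hfun : ∀ D : ℝ, Jfun D = if D ≤ T then low D else high D) :
    low T = high T ∧ deriv low T = deriv high T ∧
    ContDiffOn ℝ 1 Jfun (Ioi 0) ∧
    ContDiffOn ℝ 2 Jfun (Ioo 0 T) ∧ ContDiffOn ℝ 2 Jfun (Ioi T) ∧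
    (∀ D ∈ Ioo 0 T, deriv (deriv Jfun) D + θ1 * deriv Jfun D + 2 = 0) ∧
    (∀ D ∈ Ioi T, deriv (deriv Jfun) D + θ0 * deriv Jfun D = 0) ∧
    Jfun 0 = 0 ∧
    Tendsto Jfun atTop (nhds 0) := by
  have hθ1 : 0 < θ1 := hθ0.trans hθ01
  have hθ1' : θ1 ≠ 0 := hθ1.ne'
  have hElt : Real.exp (-θ1 * T) < 1 := by
    rw [Real.exp_lt_one_iff]; nlinarith
  have hcpos : 0 < 1 - Real.exp (-θ1 * T) := by linarith
  have hc : (1 - Real.exp (-θ1 * T)) ≠ 0 := hcpos.ne'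
  have hdpos : 0 < θ0 / θ1 + (1 - θ0 / θ1) * Real.exp (-θ1 * T) := by
    have h1 : 0 < θ0 / θ1 := div_pos hθ0 hθ1
    have h2 : 0 < 1 - θ0 / θ1 := by
      rw [sub_pos]; exact (div_lt_one hθ1).2 hθ01
    have h3 : 0 < Real.exp (-θ1 * T) := Real.exp_pos _
    positivity
  have hd : θ0 / θ1 + (1 - θ0 / θ1) * Real.exp (-θ1 * T) ≠ 0 := hdpos.ne'
  set E := Real.exp (-θ1 * T) with hE
  have hleq : low = fun D => (JT + (2 / θ1) * T) * (1 - Real.exp (-θ1 * D))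
      / (1 - Real.exp (-θ1 * T)) - (2 / θ1) * D := funext hlow
  have hheq : high = fun D => Real.exp (-θ0 * (D - T)) * JT := funext hhigh
  -- derivative of low
  have hexp1 : ∀ D : ℝ, HasDerivAt (fun x : ℝ => Real.exp (-θ1 * x))
      (Real.exp (-θ1 * D) * (-θ1)) D := by
    intro D
    have h1 : HasDerivAt (fun x : ℝ => -θ1 * x) (-θ1) D := by
      simpa using (hasDerivAt_id D).const_mul (-θ1)
    exact h1.exp
  have hlowD : ∀ D : ℝ, HasDerivAt low
      ((JT + (2 / θ1) * T) * (θ1 * Real.exp (-θ1 * D)) / (1 - Real.exp (-θ1 * T)) - 2 / θ1) D := by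
    intro D
    rw [hleq]
    have h3 := (((hexp1 D).const_sub 1).const_mul (JT + (2 / θ1) * T)).div_const
      (1 - Real.exp (-θ1 * T))
    have h4 : HasDerivAt (fun x : ℝ => (2 / θ1) * x) (2 / θ1) D := by
      simpa using (hasDerivAt_id D).const_mul ((2 : ℝ) / θ1)
    have h5 := h3.sub h4
    refine h5.congr_deriv ?_
    ring
  have hexp0 : ∀ D : ℝ, HasDerivAt (fun x : ℝ => Real.exp (-θ0 * (x - T)))
      (Real.exp (-θ0 * (D - T)) * (-θ0)) D := by
    intro D
    have h1 : HasDerivAt (fun x : ℝ => -θ0 * (x - T)) (-θ0) D := by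
      simpa using ((hasDerivAt_id D).sub_const T).const_mul (-θ0)
    exact h1.exp
  have hhighD : ∀ D : ℝ, HasDerivAt high (-θ0 * Real.exp (-θ0 * (D - T)) * JT) D := by
    intro D
    rw [hheq]
    have h2 := (hexp0 D).mul_const JT
    refine h2.congr_deriv ?_
    ring
  -- value match at T
  have hval : low T = high T := by
    rw [hlow, hhigh]
    have h0 : -θ0 * (T - T) = 0 := by ring
    rw [h0, Real.exp_zero, one_mul, mul_div_assoc, div_self hc, mul_one]
    ring
  -- derivative values
  have hdlow : deriv low = fun D => (JT + (2 / θ1) * T) * (θ1 * Real.exp (-θ1 * D))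
      / (1 - Real.exp (-θ1 * T)) - 2 / θ1 := funext fun D => (hlowD D).deriv
  have hdhigh : deriv high = fun D => -θ0 * Real.exp (-θ0 * (D - T)) * JT :=
    funext fun D => (hhighD D).deriv
  -- derivative match at T (smooth pasting)
  have hdermatch : (JT + (2 / θ1) * T) * (θ1 * Real.exp (-θ1 * T))
      / (1 - Real.exp (-θ1 * T)) - 2 / θ1 = -θ0 * Real.exp (-θ0 * (T - T)) * JT := by
    have h1 : JT * (θ0 / θ1 + (1 - θ0 / θ1) * E) = 2 / θ1 ^ 2 * (1 - (1 + θ1 * T) * E) := by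
      rw [hJT]; exact div_mul_cancel₀ _ hd
    have keyP : JT * (θ0 * θ1 + (θ1 ^ 2 - θ0 * θ1) * E)
        = 2 * (1 - (1 + θ1 * T) * E) := by
      have h3 : θ0 * θ1 + (θ1 ^ 2 - θ0 * θ1) * E = θ1 ^ 2 * (θ0 / θ1 + (1 - θ0 / θ1) * E) := by
        field_simp
      rw [h3, ← mul_assoc, mul_comm JT (θ1 ^ 2), mul_assoc, h1]
      field_simp
    have h0 : -θ0 * (T - T) = 0 := by ring
    have hne : (1 - E) * θ1 ≠ 0 := mul_ne_zero hc hθ1'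
    rw [h0, Real.exp_zero, div_sub_div _ _ hc hθ1', div_eq_iff hne]
    field_simp
    have hEE : Real.exp (-(θ1 * T)) = E := by rw [hE, neg_mul]
    rw [hEE]
    linear_combination keyP
  have hder : deriv low T = deriv high T := by
    rw [hdlow, hdhigh]; exact hdermatch
  -- Jfun equals low/high where appropriate
  have hJlow : ∀ x ≤ T, Jfun x = low x := fun x hx => by rw [hfun, if_pos hx]
  have hJhigh : ∀ x, T ≤ x → Jfun x = high x := by
    intro x hx
    rcases eq_or_lt_of_le hx with h | h
    · rw [hfun, if_pos h.symm.le, ← h, hval]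
    · rw [hfun, if_neg (not_le.2 h)]
  -- global derivative
  set g : ℝ → ℝ := fun D => if D ≤ T then
      (JT + (2 / θ1) * T) * (θ1 * Real.exp (-θ1 * D)) / (1 - Real.exp (-θ1 * T)) - 2 / θ1
    else -θ0 * Real.exp (-θ0 * (D - T)) * JT with hg
  have hJd : ∀ D : ℝ, HasDerivAt Jfun (g D) D := by
    intro D
    rcases lt_trichotomy D T with h | h | h
    · have hev : Jfun =ᶠ[nhds D] low :=
        Filter.eventuallyEq_of_mem (Iio_mem_nhds h) (fun x hx => hJlow x (le_of_lt hx))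
      have := (hlowD D).congr_of_eventuallyEq hev
      simpa [hg, if_pos h.le] using this
    · rw [h]
      have hL : HasDerivWithinAt Jfun
          ((JT + (2 / θ1) * T) * (θ1 * Real.exp (-θ1 * T)) / (1 - Real.exp (-θ1 * T)) - 2 / θ1)
          (Iic T) T :=
        ((hlowD T).hasDerivWithinAt).congr (fun x hx => hJlow x hx) (hJlow T le_rfl)
      have hR : HasDerivWithinAt Jfun
          ((JT + (2 / θ1) * T) * (θ1 * Real.exp (-θ1 * T)) / (1 - Real.exp (-θ1 * T)) - 2 / θ1)
          (Ici T) T := by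
        rw [hdermatch]
        exact ((hhighD T).hasDerivWithinAt).congr (fun x hx => hJhigh x hx) (hJhigh T le_rfl)
      have hU := hL.union hR
      rw [Iic_union_Ici] at hU
      have := hU.hasDerivAt (by simp)
      simpa [hg, if_pos le_rfl] using this
    · have hev : Jfun =ᶠ[nhds D] high :=
        Filter.eventuallyEq_of_mem (Ioi_mem_nhds h) (fun x hx => hJhigh x (le_of_lt hx))
      have := (hhighD D).congr_of_eventuallyEq hev
      simpa [hg, if_neg (not_le.2 h)] using this
  have hgcont : Continuous g := by
    rw [hg]
    apply Continuous.if_le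
    · fun_prop
    · fun_prop
    · exact continuous_id
    · exact continuous_const
    · intro x hx
      subst hx
      exact hdermatch
  have hJdiff : Differentiable ℝ Jfun := fun D => (hJd D).differentiableAt
  have hJderiv : deriv Jfun = g := funext fun D => (hJd D).deriv
  have hC1 : ContDiff ℝ 1 Jfun := by
    rw [contDiff_one_iff_deriv]
    exact ⟨hJdiff, hJderiv ▸ hgcont⟩
  -- smoothness of branches
  have e1 : ContDiff ℝ 2 (fun x : ℝ => Real.exp (-θ1 * x)) :=
    Real.contDiff_exp.comp (contDiff_const.mul contDiff_id)
  have hlowC : ContDiff ℝ 2 low := by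
    rw [hleq]
    exact ((contDiff_const.mul (contDiff_const.sub e1)).div_const _).sub
      (contDiff_const.mul contDiff_id)
  have hhighC : ContDiff ℝ 2 high := by
    rw [hheq]
    exact (Real.contDiff_exp.comp
      (contDiff_const.mul (contDiff_id.sub contDiff_const))).mul contDiff_const
  -- second derivatives
  have hlowDD : ∀ D : ℝ, HasDerivAt (deriv low)
      (-((JT + (2 / θ1) * T) * (θ1 ^ 2 * Real.exp (-θ1 * D)) / (1 - Real.exp (-θ1 * T)))) D := by
    intro D
    rw [hdlow]
    have h2 := ((((hexp1 D).const_mul θ1).const_mul (JT + (2 / θ1) * T)).div_const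
      (1 - Real.exp (-θ1 * T))).sub_const (2 / θ1)
    refine h2.congr_deriv ?_
    field_simp
  have hhighDD : ∀ D : ℝ, HasDerivAt (deriv high)
      (θ0 ^ 2 * Real.exp (-θ0 * (D - T)) * JT) D := by
    intro D
    rw [hdhigh]
    have h2 := (((hexp0 D).const_mul (-θ0)).mul_const JT)
    refine h2.congr_deriv ?_
    ring
  refine ⟨hval, hder, hC1.contDiffOn, ?_, ?_, ?_, ?_, ?_, ?_⟩
  · exact hlowC.contDiffOn.congr (fun x hx => hJlow x hx.2.le)
  · exact hhighC.contDiffOn.congr (fun x hx => hJhigh x (le_of_lt hx))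
  · intro D hD
    have hev : Jfun =ᶠ[nhds D] low :=
      Filter.eventuallyEq_of_mem (Iio_mem_nhds hD.2) (fun x hx => hJlow x (le_of_lt hx))
    have h1 : deriv Jfun =ᶠ[nhds D] deriv low := hev.deriv
    have h2 : deriv Jfun D = deriv low D := h1.eq_of_nhds
    have h3 : deriv (deriv Jfun) D = deriv (deriv low) D := h1.deriv_eq
    rw [h2, h3, (hlowDD D).deriv, hdlow]
    field_simp
    ring
  · intro D hD
    have hev : Jfun =ᶠ[nhds D] high :=
      Filter.eventuallyEq_of_mem (Ioi_mem_nhds hD) (fun x hx => hJhigh x (le_of_lt hx))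
    have h1 : deriv Jfun =ᶠ[nhds D] deriv high := hev.deriv
    have h2 : deriv Jfun D = deriv high D := h1.eq_of_nhds
    have h3 : deriv (deriv Jfun) D = deriv (deriv high) D := h1.deriv_eq
    rw [h2, h3, (hhighDD D).deriv, hdhigh]
    ring
  · rw [hJlow 0 hT.le, hlow]
    simp
  · have h1 : Tendsto (fun D : ℝ => θ0 * (D - T)) atTop atTop := by
      apply Filter.Tendsto.const_mul_atTop hθ0
      exact tendsto_atTop_add_const_right atTop (-T) tendsto_id
    have h2 : Tendsto (fun D : ℝ => -θ0 * (D - T)) atTop atBot := by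
      rw [show (fun D : ℝ => -θ0 * (D - T)) = (fun x : ℝ => -(θ0 * (x - T))) from
        funext fun x => by ring]
      exact tendsto_neg_atTop_atBot.comp h1
    have h3 : Tendsto (fun D : ℝ => Real.exp (-θ0 * (D - T)) * JT) atTop (nhds (0 * JT)) :=
      (Real.tendsto_exp_atBot.comp h2).mul_const JT
    rw [zero_mul] at h3
    apply h3.congr'
    filter_upwards [eventually_gt_atTop T] with D hD
    rw [hJhigh D hD.le, hhigh]
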